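/- For integers 2 ≤ k ≤ n/2, the following inequality holds: k ∫_0^{(k-1)/n} t^{k-1}(1-t)^{n-k} dt ≤ (n-k) ∫_0^{k/n} t^k (1-t)^{n-k-1} dt. -/

import Mathlib

open Real

-- Key scalar inequality
lemma keyineq (k d : ℕ) (hk : 2 ≤ k) (hkd : k ≤ d) (y : ℝ) (hy0 : 0 ≤ y)
    (hyk : (k : ℝ) * y ≤ 1) :
    1 ≤ (1 - y) ^ (k - 1) * (1 + (k : ℝ) / d * y) ^ d := by
  have hk0 : (0:ℝ) < k := by positivity
  have hk2 : (2:ℝ) ≤ k := by exact_mod_cast hk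
  have hd0 : (0:ℝ) < d := by
    have : 0 < d := by omega
    exact_mod_cast this
  have hkd' : (k:ℝ) ≤ d := by exact_mod_cast hkd
  have hy1 : y ≤ 1/2 := by nlinarith [mul_le_mul_of_nonneg_right hk2 hy0]
  have hcy : 0 ≤ (k:ℝ)/d * y := by positivity
  -- Step A : (1+y)^k ≤ (1 + k/d * y)^d
  have hA : (1 + y) ^ k ≤ (1 + (k:ℝ)/d * y) ^ d := by
    have hp : (1:ℝ) ≤ (d:ℝ)/k := by
      rw [le_div_iff₀ hk0]; linarith
    have h1 : 1 + y ≤ (1 + (k:ℝ)/d * y) ^ ((d:ℝ)/k) := by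
      have h := one_add_mul_self_le_rpow_one_add (s := (k:ℝ)/d * y) (by linarith) hp
      have he : (d:ℝ)/k * ((k:ℝ)/d * y) = y := by field_simp
      rwa [he] at h
    calc (1 + y) ^ k = ((1 + y) : ℝ) ^ (k:ℝ) := by rw [rpow_natCast]
      _ ≤ ((1 + (k:ℝ)/d * y) ^ ((d:ℝ)/k)) ^ (k:ℝ) :=
          rpow_le_rpow (by linarith) h1 (by positivity)
      _ = (1 + (k:ℝ)/d * y) ^ ((d:ℝ)/k * (k:ℝ)) := by
          rw [← rpow_mul (by positivity)]
      _ = (1 + (k:ℝ)/d * y) ^ ((d:ℝ)) := by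
          congr 1; field_simp
      _ = (1 + (k:ℝ)/d * y) ^ d := by rw [rpow_natCast]
  -- Step B : 1 ≤ (1-y)^(k-1) * (1+y)^k
  have hB : 1 ≤ (1 - y) ^ (k - 1) * (1 + y) ^ k := by
    obtain ⟨m, rfl⟩ : ∃ m, k = m + 1 := ⟨k - 1, by omega⟩
    simp only [Nat.add_sub_cancel]
    have hexp : (1 - y) ^ m * (1 + y) ^ (m+1) = (1 - y^2) ^ m * (1 + y) := by
      rw [pow_succ, ← mul_assoc, ← mul_pow]
      ring_nf
    rw [hexp]
    have hber : 1 + (m : ℝ) * (-(y^2)) ≤ (1 + (-(y^2))) ^ m :=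
      one_add_mul_le_pow (by nlinarith) _
    have h2 : 1 - (m:ℝ) * y^2 ≤ (1 - y^2) ^ m := by
      have e1 : (1:ℝ) + (m:ℝ) * (-(y^2)) = 1 - (m:ℝ)*y^2 := by ring
      have e2 : (1:ℝ) + (-(y^2)) = 1 - y^2 := by ring
      rwa [e1, e2] at hber
    have hyk' : ((m:ℝ)+1) * y ≤ 1 := by push_cast at hyk ⊢; linarith
    nlinarith [mul_nonneg hy0 (sub_nonneg.2 hyk'), mul_nonneg (mul_nonneg hy0 hy0) hy0,
      sq_nonneg y, mul_nonneg hy0 hy0, h2]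
  calc (1:ℝ) ≤ (1 - y) ^ (k - 1) * (1 + y) ^ k := hB
    _ ≤ (1 - y) ^ (k - 1) * (1 + (k:ℝ)/d * y) ^ d := by
        apply mul_le_mul_of_nonneg_left hA
        apply pow_nonneg; linarith

lemma pointwise (n k : ℕ) (hk : 2 ≤ k) (hkn : 2 * k ≤ n) (t : ℝ)
    (h1 : ((k : ℝ) - 1) / n ≤ t) (h2 : t ≤ (k : ℝ) / n) :
    ((k:ℝ)/n) ^ (k-1) * (1 - (k:ℝ)/n) ^ (n-k) ≤ t ^ (k-1) * (1 - t) ^ (n-k) := by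
  have hn0 : (0:ℝ) < n := by
    have : 0 < n := by omega
    exact_mod_cast this
  have hk0 : (0:ℝ) < k := by positivity
  have hnk : k ≤ n - k := by omega
  have hnkc : ((n - k : ℕ) : ℝ) = (n:ℝ) - k := by
    have : k ≤ n := by omega
    push_cast [Nat.cast_sub this]; ring
  have hnk0 : (0:ℝ) < (n:ℝ) - k := by
    have : ((k:ℝ)) ≤ ((n-k:ℕ):ℝ) := by exact_mod_cast hnk
    rw [hnkc] at this; linarith
  set y : ℝ := ((k:ℝ)/n - t) * n / k with hy
  have hy0 : 0 ≤ y := by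
    apply div_nonneg _ hk0.le
    apply mul_nonneg _ hn0.le
    linarith
  have htn : (k:ℝ) - 1 ≤ t * n := by
    rw [div_le_iff₀ hn0] at h1; linarith
  have hyk : (k:ℝ) * y ≤ 1 := by
    have hkyval : (k:ℝ) * y = (k:ℝ) - t * n := by
      rw [hy]; field_simp
    rw [hkyval]; linarith
  have ht : t = (k:ℝ)/n * (1 - y) := by
    rw [hy]; field_simp; ring
  have h1t : 1 - t = (1 - (k:ℝ)/n) * (1 + (k:ℝ)/((n-k:ℕ):ℝ) * y) := by
    rw [hy, hnkc]; field_simp; ring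
  have hkey := keyineq k (n - k) hk hnk y hy0 hyk
  have hb0 : (0:ℝ) ≤ ((k:ℝ)/n) ^ (k-1) * (1 - (k:ℝ)/n) ^ (n-k) := by
    apply mul_nonneg (by positivity)
    apply pow_nonneg
    rw [sub_nonneg, div_le_one hn0]; linarith
  calc ((k:ℝ)/n) ^ (k-1) * (1 - (k:ℝ)/n) ^ (n-k)
      = (((k:ℝ)/n) ^ (k-1) * (1 - (k:ℝ)/n) ^ (n-k)) * 1 := by ring
    _ ≤ (((k:ℝ)/n) ^ (k-1) * (1 - (k:ℝ)/n) ^ (n-k)) *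
        ((1 - y) ^ (k - 1) * (1 + (k:ℝ)/((n-k:ℕ):ℝ) * y) ^ (n-k)) := by
          apply mul_le_mul_of_nonneg_left hkey hb0
    _ = t ^ (k-1) * (1 - t) ^ (n-k) := by
          rw [h1t, ht, mul_pow, mul_pow]; ring

open intervalIntegral

lemma ibp (n k : ℕ) (hk : 2 ≤ k) (hkn : 2 * k ≤ n) (b : ℝ) :
    (k : ℝ) * (∫ t in (0:ℝ)..b, t ^ (k-1) * (1 - t) ^ (n-k)) -
      ((n:ℝ) - k) * (∫ t in (0:ℝ)..b, t ^ k * (1 - t) ^ (n-k-1)) =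
      b ^ k * (1 - b) ^ (n-k) := by
  have hkn' : k ≤ n := by omega
  have hnkc : ((n - k : ℕ) : ℝ) = (n:ℝ) - k := by push_cast [Nat.cast_sub hkn']; ring
  have hderiv : ∀ x ∈ Set.uIcc (0:ℝ) b,
      HasDerivAt (fun t : ℝ => t ^ k * (1 - t) ^ (n-k))
        ((k:ℝ) * (x ^ (k-1) * (1 - x) ^ (n-k)) - ((n:ℝ) - k) * (x ^ k * (1 - x) ^ (n-k-1))) x := by
    intro x _
    have h1 : HasDerivAt (fun t : ℝ => t ^ k) ((k:ℝ) * x ^ (k-1)) x := by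
      simpa using hasDerivAt_pow k x
    have h0 : HasDerivAt (fun t : ℝ => 1 - t) (-1) x := by
      simpa using (hasDerivAt_id x).const_sub 1
    have h2 : HasDerivAt (fun t : ℝ => (1 - t) ^ (n-k))
        (((n-k:ℕ):ℝ) * (1 - x) ^ (n-k-1) * (-1)) x := h0.pow (n-k)
    have := h1.mul h2
    refine this.congr_deriv ?_
    rw [hnkc]; ring
  have hcont1 : Continuous fun x : ℝ => x ^ (k-1) * (1 - x) ^ (n-k) := by fun_prop
  have hcont2 : Continuous fun x : ℝ => x ^ k * (1 - x) ^ (n-k-1) := by fun_prop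
  have hint : IntervalIntegrable
      (fun x : ℝ => (k:ℝ) * (x ^ (k-1) * (1 - x) ^ (n-k)) - ((n:ℝ) - k) * (x ^ k * (1 - x) ^ (n-k-1)))
      MeasureTheory.volume 0 b :=
    ((continuous_const.mul hcont1).sub (continuous_const.mul hcont2)).intervalIntegrable 0 b
  have heq := integral_eq_sub_of_hasDerivAt hderiv hint
  rw [integral_sub ((hcont1.intervalIntegrable 0 b).const_mul (k:ℝ))
      ((hcont2.intervalIntegrable 0 b).const_mul ((n:ℝ) - k)),
    intervalIntegral.integral_const_mul, intervalIntegral.integral_const_mul] at heq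
  rw [heq]
  have hk0 : k ≠ 0 := by omega
  simp [zero_pow hk0]

/-- For integers 2 ≤ k ≤ n/2:
k ∫_0^{(k-1)/n} t^{k-1}(1-t)^{n-k} dt ≤ (n-k) ∫_0^{k/n} t^k (1-t)^{n-k-1} dt. -/
theorem beta_integral_inequality (n k : ℕ) (hk : 2 ≤ k) (hkn : 2 * k ≤ n) :
    (k : ℝ) * ∫ t in (0 : ℝ)..(((k : ℝ) - 1) / n), t ^ (k - 1) * (1 - t) ^ (n - k) ≤
      ((n : ℝ) - k) * ∫ t in (0 : ℝ)..((k : ℝ) / n), t ^ k * (1 - t) ^ (n - k - 1) := by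
  have hn0 : (0:ℝ) < n := by
    have : 0 < n := by omega
    exact_mod_cast this
  have hk2 : (2:ℝ) ≤ k := by exact_mod_cast hk
  have hk0 : (0:ℝ) < k := by positivity
  set a : ℝ := ((k:ℝ) - 1) / n with ha
  set b : ℝ := (k:ℝ) / n with hb
  have hab : a ≤ b := by
    rw [ha, hb]
    gcongr
    linarith
  have hcont1 : Continuous fun x : ℝ => x ^ (k-1) * (1 - x) ^ (n-k) := by fun_prop
  have int1 : IntervalIntegrable (fun x : ℝ => x ^ (k-1) * (1 - x) ^ (n-k))
      MeasureTheory.volume 0 a := hcont1.intervalIntegrable 0 a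
  have int2 : IntervalIntegrable (fun x : ℝ => x ^ (k-1) * (1 - x) ^ (n-k))
      MeasureTheory.volume a b := hcont1.intervalIntegrable a b
  have hsplit : (∫ t in (0:ℝ)..a, t ^ (k-1) * (1 - t) ^ (n-k))
      + (∫ t in a..b, t ^ (k-1) * (1 - t) ^ (n-k))
      = ∫ t in (0:ℝ)..b, t ^ (k-1) * (1 - t) ^ (n-k) :=
    integral_add_adjacent_intervals int1 int2
  have hmono : ∫ _x in a..b, (b ^ (k-1) * (1 - b) ^ (n-k))
      ≤ ∫ t in a..b, t ^ (k-1) * (1 - t) ^ (n-k) := by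
    apply integral_mono_on hab (intervalIntegrable_const) int2
    intro x hx
    exact pointwise n k hk hkn x hx.1 hx.2
  have hba : b - a = 1/n := by rw [ha, hb]; ring
  rw [integral_const, hba, smul_eq_mul] at hmono
  have hkey : b ^ k * (1 - b) ^ (n-k) ≤ (k:ℝ) * ∫ t in a..b, t ^ (k-1) * (1 - t) ^ (n-k) := by
    have h := mul_le_mul_of_nonneg_left hmono hk0.le
    have hpow : b ^ (k-1) * b = b ^ k := by
      rw [← pow_succ]
      congr 1
      omega
    have heq : (k:ℝ) * (1/(n:ℝ) * (b ^ (k-1) * (1 - b) ^ (n-k)))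
        = (b ^ (k-1) * b) * (1 - b) ^ (n-k) := by rw [hb]; ring
    rw [heq, hpow] at h
    exact h
  have hibp := ibp n k hk hkn b
  have hsplit' : (k:ℝ) * (∫ t in (0:ℝ)..a, t ^ (k-1) * (1 - t) ^ (n-k))
      + (k:ℝ) * (∫ t in a..b, t ^ (k-1) * (1 - t) ^ (n-k))
      = (k:ℝ) * ∫ t in (0:ℝ)..b, t ^ (k-1) * (1 - t) ^ (n-k) := by
    rw [← mul_add, hsplit]
  linarith [hkey, hibp, hsplit']
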